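/- arXiv:1909.06882 — 7 statements merged into one kernel-verified Lean document; each statement's English description precedes it below -/
import Mathlib

section
/- Let F be a division ring, α ∈ F, and f, g ∈ F[z]. If f^r(α) = 0, then (gf)^r(α) = 0; if f^r(α) ≠ 0, then (gf)^r(α) = g^r(f^r(α) α f^r(α)⁻¹) · f^r(α). -/
open Polynomial

/-- Left evaluation of a polynomial `f = Σ zʲ fⱼ` at `a`: `f^ℓ(a) = Σ aʲ fⱼ`.
(Mathlib's `Polynomial.eval` is the right evaluation `Σ fⱼ aʲ`.) -/
noncomputable def lEval {F : Type*} [DivisionRing F] (a : F) (f : F[X]) : F :=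
  f.sum fun j c => a ^ j * c

lemma evalXmul' {F : Type*} [DivisionRing F] (α : F) (p : F[X]) :
    (X * p).eval α = p.eval α * α := by
  simp only [eval, eval₂_X_mul]

lemma evalCmul' {F : Type*} [DivisionRing F] (α : F) (a : F) (p : F[X]) :
    (C a * p).eval α = a * p.eval α := by
  rw [← smul_eq_C_mul, eval_smul, smul_eq_mul]

lemma evalXpowmul' {F : Type*} [DivisionRing F] (α : F) (n : ℕ) (p : F[X]) :
    (X ^ n * p).eval α = p.eval α * α ^ n := by
  induction n with
  | zero => simp
  | succ n ih => rw [pow_succ', mul_assoc, evalXmul', ih, pow_succ, mul_assoc]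

lemma evalMonmul {F : Type*} [DivisionRing F] (α : F) (n : ℕ) (a : F) (p : F[X]) :
    ((monomial n a) * p).eval α = a * (p.eval α * α ^ n) := by
  rw [← C_mul_X_pow_eq_monomial, mul_assoc, evalCmul', evalXpowmul']

/-- Right product formula: if f^r(α)=0 then (gf)^r(α)=0; otherwise
(gf)^r(α) = g^r(f^r(α) α f^r(α)⁻¹)·f^r(α). -/
theorem stmt3 {F : Type*} [DivisionRing F] (α : F) (f g : F[X]) :
    (f.eval α = 0 → (g * f).eval α = 0) ∧
    (f.eval α ≠ 0 →
      (g * f).eval α = g.eval (f.eval α * α * (f.eval α)⁻¹) * f.eval α) := by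
  constructor
  · intro h
    induction g using Polynomial.induction_on' with
    | add p q hp hq => rw [add_mul, eval_add, hp, hq, add_zero]
    | monomial n a => rw [evalMonmul, h, zero_mul, mul_zero]
  · intro h
    set e := f.eval α with he
    induction g using Polynomial.induction_on' with
    | add p q hp hq => rw [add_mul, eval_add, hp, hq, eval_add, add_mul]
    | monomial n a =>
      rw [evalMonmul, eval_monomial]
      have conj : (e * α * e⁻¹) ^ n = e * α ^ n * e⁻¹ := by
        induction n with
        | zero => simp [mul_inv_cancel₀ h]
        | succ n ih =>
          rw [pow_succ, ih, pow_succ]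
          simp only [mul_assoc, inv_mul_cancel_left₀ h]
      rw [conj, mul_assoc, mul_assoc, mul_assoc, inv_mul_cancel₀ h, mul_one,
        ← mul_assoc]
end

section
/- For a division ring F, α, β ∈ F and f ∈ F[z], let L_α f denote the left quotient of f by z - α (so f = f^ℓ(α) + (z-α)·(L_α f)) and R_β f the right quotient (so f = f^r(β) + (R_β f)·(z-β)). Then (L_α f)^r(β) = (R_β f)^ℓ(α). -/
open Polynomial

section aux

variable {F : Type*} [DivisionRing F]

lemma lEval_zero (a : F) : lEval a 0 = 0 := by
  simp [lEval]

lemma lEval_add (a : F) (p q : F[X]) : lEval a (p + q) = lEval a p + lEval a q := by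
  unfold lEval
  exact Polynomial.sum_add_index p q _ (fun j => mul_zero _) (fun j b c => mul_add _ _ _)

lemma lEval_monomial (a : F) (n : ℕ) (c : F) :
    lEval a (monomial n c) = a ^ n * c := by
  unfold lEval
  exact Polynomial.sum_monomial_index c _ (mul_zero _)

lemma lEval_finset_sum (a : F) {ι : Type*} (s : Finset ι) (g : ι → F[X]) :
    lEval a (∑ i ∈ s, g i) = ∑ i ∈ s, lEval a (g i) := by
  classical
  induction s using Finset.induction_on with
  | empty => simp [lEval_zero]
  | insert _ _ h ih => rw [Finset.sum_insert h, Finset.sum_insert h, lEval_add, ih]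

/-- explicit left quotient of `f` by `X - α` -/
noncomputable def LQ (α : F) (f : F[X]) : F[X] :=
  f.sum fun n c => ∑ i ∈ Finset.range n, C (α ^ i * c) * X ^ (n - 1 - i)

/-- explicit right quotient of `f` by `X - β` -/
noncomputable def RQ (β : F) (f : F[X]) : F[X] :=
  f.sum fun n c => ∑ i ∈ Finset.range n, C (c * β ^ i) * X ^ (n - 1 - i)

lemma LQ_add (α : F) (p q : F[X]) : LQ α (p + q) = LQ α p + LQ α q := by
  unfold LQ
  refine Polynomial.sum_add_index p q _ (fun j => ?_) (fun j b c => ?_)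
  · simp
  · rw [← Finset.sum_add_distrib]
    refine Finset.sum_congr rfl fun i _ => ?_
    rw [mul_add, map_add, add_mul]

lemma RQ_add (β : F) (p q : F[X]) : RQ β (p + q) = RQ β p + RQ β q := by
  unfold RQ
  refine Polynomial.sum_add_index p q _ (fun j => ?_) (fun j b c => ?_)
  · simp
  · rw [← Finset.sum_add_distrib]
    refine Finset.sum_congr rfl fun i _ => ?_
    rw [add_mul, map_add, add_mul]

lemma LQ_monomial (α : F) (n : ℕ) (c : F) :
    LQ α (monomial n c) = ∑ i ∈ Finset.range n, C (α ^ i * c) * X ^ (n - 1 - i) := by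
  unfold LQ
  refine Polynomial.sum_monomial_index c _ ?_
  simp

lemma RQ_monomial (β : F) (n : ℕ) (c : F) :
    RQ β (monomial n c) = ∑ i ∈ Finset.range n, C (c * β ^ i) * X ^ (n - 1 - i) := by
  unfold RQ
  refine Polynomial.sum_monomial_index c _ ?_
  simp

lemma LQ_spec (α : F) (f : F[X]) :
    (X - C α) * LQ α f = f - C (lEval α f) := by
  induction f using Polynomial.induction_on' with
  | add p q hp hq =>
    rw [LQ_add, mul_add, hp, hq, lEval_add, map_add]; abel
  | monomial n c =>
    rw [LQ_monomial, lEval_monomial, Finset.mul_sum]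
    have key : ∀ i ∈ Finset.range n,
        (X - C α) * (C (α ^ i * c) * X ^ (n - 1 - i))
          = C (α ^ i * c) * X ^ (n - i) - C (α ^ (i + 1) * c) * X ^ (n - (i + 1)) := by
      intro i hi
      rw [Finset.mem_range] at hi
      rw [sub_mul, X_mul, mul_assoc, ← pow_succ]
      have : n - 1 - i + 1 = n - i := by omega
      rw [this, ← mul_assoc, ← C_mul, ← mul_assoc, ← pow_succ']
      have : n - (i + 1) = n - 1 - i := by omega
      rw [this]
    rw [Finset.sum_congr rfl key, Finset.sum_range_sub']
    simp [C_mul_X_pow_eq_monomial]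

lemma RQ_spec (β : F) (f : F[X]) :
    RQ β f * (X - C β) = f - C (f.eval β) := by
  induction f using Polynomial.induction_on' with
  | add p q hp hq =>
    rw [RQ_add, add_mul, hp, hq, eval_add, map_add]; abel
  | monomial n c =>
    rw [RQ_monomial, Finset.sum_mul]
    have key : ∀ i ∈ Finset.range n,
        C (c * β ^ i) * X ^ (n - 1 - i) * (X - C β)
          = C (c * β ^ i) * X ^ (n - i) - C (c * β ^ (i + 1)) * X ^ (n - (i + 1)) := by
      intro i hi
      rw [Finset.mem_range] at hi
      rw [mul_sub, mul_assoc, ← pow_succ]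
      have h1 : n - 1 - i + 1 = n - i := by omega
      rw [h1]
      have h2 : X ^ (n - 1 - i) * C β = C β * X ^ (n - 1 - i) := by
        exact (commute_X_pow (C β) _).symm.eq ▸ rfl
      rw [mul_assoc, h2, ← mul_assoc, ← C_mul]
      have h3 : n - (i + 1) = n - 1 - i := by omega
      rw [h3, mul_assoc c, ← pow_succ]
    rw [Finset.sum_congr rfl key, Finset.sum_range_sub']
    simp [C_mul_X_pow_eq_monomial, eval_monomial]

lemma key_eval (α β : F) (f : F[X]) :
    (LQ α f).eval β = lEval α (RQ β f) := by
  induction f using Polynomial.induction_on' with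
  | add p q hp hq =>
    rw [LQ_add, RQ_add, eval_add, lEval_add, hp, hq]
  | monomial n c =>
    rw [LQ_monomial, RQ_monomial, eval_finset_sum, lEval_finset_sum]
    have h1 : ∀ i ∈ Finset.range n,
        (C (α ^ i * c) * X ^ (n - 1 - i)).eval β = α ^ i * c * β ^ (n - 1 - i) := by
      intro i _
      rw [C_mul_X_pow_eq_monomial, eval_monomial]
    have h2 : ∀ i ∈ Finset.range n,
        lEval α (C (c * β ^ i) * X ^ (n - 1 - i)) = α ^ (n - 1 - i) * (c * β ^ i) := by
      intro i _
      rw [C_mul_X_pow_eq_monomial, lEval_monomial]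
    rw [Finset.sum_congr rfl h1, Finset.sum_congr rfl h2]
    rw [← Finset.sum_range_reflect (fun j => α ^ j * c * β ^ (n - 1 - j)) n]
    refine Finset.sum_congr rfl fun j hj => ?_
    rw [Finset.mem_range] at hj
    have : n - 1 - (n - 1 - j) = j := by omega
    rw [this, mul_assoc]

end aux

/-- (L_α f)^r(β) = (R_β f)^ℓ(α), with L_α f and R_β f the left/right quotients
of f by z - α and z - β, characterized by their defining equations. -/
theorem stmt4 {F : Type*} [DivisionRing F] (α β : F) (f qL qR : F[X])
    (hL : f = C (lEval α f) + (X - C α) * qL)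
    (hR : f = C (f.eval β) + qR * (X - C β)) :
    qL.eval β = lEval α qR := by
  have hX1 : (X - C α : F[X]) ≠ 0 := X_sub_C_ne_zero α
  have hX2 : (X - C β : F[X]) ≠ 0 := X_sub_C_ne_zero β
  have e1 : (X - C α) * qL = (X - C α) * LQ α f := by
    rw [LQ_spec]
    set a := lEval α f with ha
    rw [hL]; abel
  have e2 : qR * (X - C β) = RQ β f * (X - C β) := by
    rw [RQ_spec]
    set b := eval β f with hb
    rw [hR]; abel
  have hq1 : qL = LQ α f := mul_left_cancel₀ hX1 e1
  have hq2 : qR = RQ β f := mul_right_cancel₀ hX2 e2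
  rw [hq1, hq2, key_eval]
end

section
/- For a division ring F, any α, β ∈ F and any f ∈ F[z], the element ψ = (L_α f)^r(β) satisfies the Sylvester identity α·ψ − ψ·β = f^ℓ(α) − f^r(β). -/
open Polynomial

/-- The element ψ = (L_α f)^r(β) satisfies α·ψ − ψ·β = f^ℓ(α) − f^r(β). -/
theorem stmt5 {F : Type*} [DivisionRing F] (α β : F) (f q : F[X])
    (hq : f = C (lEval α f) + (X - C α) * q) :
    α * q.eval β - q.eval β * β = lEval α f - f.eval β := by
  have h := congrArg (eval β) hq
  rw [eval_add, eval_C, sub_mul, eval_sub, X_mul, eval_mul_X, eval_C_mul] at h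
  rw [h]
  abel
end

section
/- Let F be a division ring, α ∈ F, f, g ∈ F[z]. If g^ℓ(α) = 0 then L_α(gf) = (L_α g)·f. If g^ℓ(α) ≠ 0, then L_α(gf) = (L_α g)·f + g^ℓ(α)·(L_{α̃} f), where α̃ = g^ℓ(α)⁻¹ α g^ℓ(α). -/
open Polynomial

private theorem aux_zero {F : Type*} [DivisionRing F] (α c : F) (q : F[X])
    (h : (X - C α) * q = C c) : q = 0 := by
  by_contra hq
  have hd := congrArg degree h
  rw [(monic_X_sub_C α).degree_mul_comm, (monic_X_sub_C α).degree_mul,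
    degree_X_sub_C] at hd
  have h1 : (1 : WithBot ℕ) ≤ degree q + 1 := by
    have := zero_le_degree_iff.mpr hq
    exact le_trans (by norm_num) (add_le_add this (le_refl (1 : WithBot ℕ)))
  rw [hd] at h1
  exact absurd (le_trans h1 degree_C_le) (by norm_num)

private theorem aux_cancel {F : Type*} [DivisionRing F] (α a b : F) (p q : F[X])
    (h : C a + (X - C α) * p = C b + (X - C α) * q) : p = q := by
  have h2 : (X - C α) * (p - q) = C (b - a) := by
    rw [mul_sub, C_sub, sub_eq_sub_iff_add_eq_add, add_comm]
    exact h
  exact sub_eq_zero.mp (aux_zero α (b - a) (p - q) h2)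

/-- Product rule for the left backward shift L_α: if g^ℓ(α)=0 then L_α(gf) = (L_α g)·f;
if g^ℓ(α)≠0 then L_α(gf) = (L_α g)·f + g^ℓ(α)·(L_{α̃} f) with α̃ = g^ℓ(α)⁻¹ α g^ℓ(α). -/
theorem stmt6 {F : Type*} [DivisionRing F] (α : F) (f g qg qgf : F[X])
    (hg : g = C (lEval α g) + (X - C α) * qg)
    (hgf : g * f = C (lEval α (g * f)) + (X - C α) * qgf) :
    (lEval α g = 0 → qgf = qg * f) ∧
    (lEval α g ≠ 0 → ∀ qf : F[X],
      f = C (lEval ((lEval α g)⁻¹ * α * lEval α g) f)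
        + (X - C ((lEval α g)⁻¹ * α * lEval α g)) * qf →
      qgf = qg * f + C (lEval α g) * qf) := by
  constructor
  · intro h0
    refine aux_cancel α (lEval α (g * f)) 0 qgf (qg * f) ?_
    rw [← hgf, hg, h0, map_zero]
    noncomm_ring
  · intro hne qf hf
    set e := lEval α g with he
    set β := e⁻¹ * α * e with hβ
    set φ := lEval β f with hφ
    have heβ : e * β = α * e := by
      rw [hβ, ← mul_assoc, ← mul_assoc, mul_inv_cancel₀ hne, one_mul]
    have key : C e * (X - C β) = (X - C α) * C e := by
      rw [mul_sub, sub_mul, ← C_mul, heβ, C_mul, X_mul_C]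
    have hgfe : g * f = C (e * φ) + (X - C α) * (qg * f + C e * qf) := by
      rw [hg, hf]
      have expand : (C e + (X - C α) * qg) * (C φ + (X - C β) * qf)
          = C e * C φ + C e * (X - C β) * qf
            + (X - C α) * (qg * (C φ + (X - C β) * qf)) := by
        noncomm_ring
      rw [expand, key, ← C_mul]
      noncomm_ring
    exact aux_cancel α (lEval α (g * f)) (e * φ) qgf (qg * f + C e * qf)
      (hgf.symm.trans hgfe)
end

section
/- Let F be a division ring, α ∈ F algebraic over the center with minimal central polynomial χ, and β ∈ F with χ(β) ≠ 0 (i.e., β not conjugate to α). Then for every γ ∈ F, the Sylvester equation αx − xβ = γ has the unique solution x = −((L_α χ)·γ)^r(β)·χ(β)⁻¹. -/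
open Polynomial

/-- χ is the minimal central polynomial of α: monic with central coefficients,
vanishing at α, of least degree among such. -/
def IsMinCentralPoly {F : Type*} [DivisionRing F] (α : F) (χ : F[X]) : Prop :=
  χ.Monic ∧ (∀ n, χ.coeff n ∈ Subring.center F) ∧ χ.eval α = 0 ∧
    ∀ g : F[X], g.Monic → (∀ n, g.coeff n ∈ Subring.center F) → g.eval α = 0 →
      χ.degree ≤ g.degree

section Helpers
open Finset
variable {F : Type*} [DivisionRing F]

variable {F : Type*} [DivisionRing F]

lemma central_eval_mul_C (f : F[X]) (hf : ∀ n, f.coeff n ∈ Subring.center F) (γ β : F) :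
    (f * C γ).eval β = γ * f.eval β := by
  rw [eval_eq_sum_range' (lt_of_le_of_lt (f.natDegree_mul_C_le γ) (Nat.lt_succ_self _)) β,
    eval_eq_sum_range, Finset.mul_sum]
  refine Finset.sum_congr rfl fun i _ => ?_
  rw [coeff_mul_C, ← mul_assoc, (Subring.mem_center_iff.mp (hf i) γ)]

lemma central_eval_comm (f : F[X]) (hf : ∀ n, f.coeff n ∈ Subring.center F) (β : F) :
    f.eval β * β = β * f.eval β := by
  rw [eval_eq_sum_range, Finset.sum_mul, Finset.mul_sum]
  refine Finset.sum_congr rfl fun i _ => ?_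
  rw [mul_assoc, ← pow_succ, ← mul_assoc β, Subring.mem_center_iff.mp (hf i) β, mul_assoc, ← pow_succ']

lemma central_eval_conj (f : F[X]) (hf : ∀ n, f.coeff n ∈ Subring.center F) (α β d : F)
    (hd : d * β = α * d) : d * f.eval β = f.eval α * d := by
  have hpow : ∀ i : ℕ, d * β ^ i = α ^ i * d := by
    intro i
    induction i with
    | zero => simp
    | succ i ih => rw [pow_succ, ← mul_assoc, ih, mul_assoc, hd, ← mul_assoc, ← pow_succ]
  rw [eval_eq_sum_range, eval_eq_sum_range, Finset.mul_sum, Finset.sum_mul]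
  refine Finset.sum_congr rfl fun i _ => ?_
  rw [← mul_assoc, Subring.mem_center_iff.mp (hf i) d, mul_assoc, hpow, ← mul_assoc, mul_assoc]

end Helpers

/-- If χ(β) ≠ 0 (β not conjugate to α), the Sylvester equation αx − xβ = γ has the
unique solution x = −((L_α χ)·γ)^r(β)·χ(β)⁻¹. -/
theorem stmt14 {F : Type*} [DivisionRing F] (α β γ : F) (χ : F[X])
    (hχ : IsMinCentralPoly α χ) (hβ : χ.eval β ≠ 0)
    (q : F[X]) (hq : χ = C (lEval α χ) + (X - C α) * q) :
    ∀ x : F, α * x - x * β = γ ↔ x = -((q * C γ).eval β) * (χ.eval β)⁻¹ := by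
  obtain ⟨hm, hc, hα, -⟩ := hχ
  have hl : lEval α χ = 0 := by
    have h0 : lEval α χ = χ.eval α := by
      rw [lEval, eval_eq_sum]
      exact Finset.sum_congr rfl fun i _ => Subring.mem_center_iff.mp (hc i) (α ^ i)
    rw [h0, hα]
  have hq' : χ = (X - C α) * q := by rwa [hl, map_zero, zero_add] at hq
  set E := χ.eval β with hE
  set P := (q * C γ).eval β with hP
  have hB : γ * E = P * β - α * P := by
    have h1 : γ * E = (χ * C γ).eval β := (central_eval_mul_C χ hc γ β).symm
    have h2 : χ * C γ = (X - C α) * (q * C γ) := by rw [hq', mul_assoc]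
    rw [h1, h2, sub_mul, eval_sub, X_mul, eval_mul_X, eval_C_mul, hP]
  have hcm : Commute β E := (central_eval_comm χ hc β).symm
  have hcm' : E⁻¹ * β = β * E⁻¹ := (hcm.inv_right₀).symm.eq
  have hx0 : α * (-P * E⁻¹) - (-P * E⁻¹) * β = γ := by
    have h3 : α * (-P * E⁻¹) - (-P * E⁻¹) * β = (P * β - α * P) * E⁻¹ := by
      rw [mul_assoc (-P), hcm']
      noncomm_ring
    rw [h3, ← hB, mul_assoc, mul_inv_cancel₀ hβ, mul_one]
  intro x
  constructor
  · intro h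
    have ha : x * β = α * x - γ := by rw [← h]; abel
    have hb2 : (-P * E⁻¹) * β = α * (-P * E⁻¹) - γ := by rw [← hx0]; abel
    have hd : (x - (-P * E⁻¹)) * β = α * (x - (-P * E⁻¹)) := by
      rw [sub_mul, mul_sub, ha, hb2]; abel
    by_contra hne
    have hdne : x - (-P * E⁻¹) ≠ 0 := sub_ne_zero.mpr hne
    have hz := central_eval_conj χ hc α β (x - (-P * E⁻¹)) hd
    rw [hα, zero_mul, ← hE] at hz
    exact hβ ((mul_eq_zero.mp hz).resolve_left hdne)
  · intro h
    rw [h]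
    exact hx0
end

section
/- Let F be a division ring and h ∈ F[z] a bounded polynomial with least central multiple M_h = h·h^◇ ∈ Z(F)[z], and let β ∈ F with M_h(β) ≠ 0. Then for nonzero d, δ ∈ F: d = (h·δ)^r(β) if and only if δ = (h^◇·d)^r(β)·M_h(β)⁻¹. -/
open Polynomial

/-- Product rule for right evaluation: `(pq)^r(β) = (p · C(q^r(β)))^r(β)`. -/
lemma evalL {F : Type*} [DivisionRing F] (β : F) (p q : F[X]) :
    (p * q).eval β = (p * C (q.eval β)).eval β := by
  induction p using Polynomial.induction_on' with
  | add f g hf hg => simp [add_mul, eval_add, hf, hg]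
  | monomial n a =>
    have key : ∀ r : F[X], (C a * X ^ n * r).eval β = a * (r.eval β * β ^ n) := by
      intro r
      rw [mul_assoc, X_pow_mul, ← mul_assoc, eval_mul_X_pow, eval_C_mul, mul_assoc]
    rw [← C_mul_X_pow_eq_monomial, key, key, eval_C]

/-- Inversion of the right λ-transform: for a bounded polynomial h with least
central multiple M = h·h^◇ and M(β) ≠ 0, for nonzero d, δ:
d = (h·δ)^r(β) ↔ δ = (h^◇·d)^r(β)·M(β)⁻¹. -/
theorem stmt17 {F : Type*} [DivisionRing F] (h hd M : F[X]) (β : F)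
    (hMc : ∀ n, M.coeff n ∈ Subring.center F)
    (h1 : M = h * hd) (h2 : M = hd * h)
    (hleast : ∀ N : F[X], (∀ n, N.coeff n ∈ Subring.center F) →
      (∃ g : F[X], N = h * g) → ∃ g : F[X], N = M * g)
    (hβ : M.eval β ≠ 0) (d δ : F) (hd0 : d ≠ 0) (hδ0 : δ ≠ 0) :
    d = (h * C δ).eval β ↔ δ = (hd * C d).eval β * (M.eval β)⁻¹ := by
  -- M has central coefficients, so it commutes with constants
  have hMC : ∀ a : F, M * C a = C a * M := by
    intro a
    ext n
    rw [coeff_mul_C, coeff_C_mul]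
    exact (Subring.mem_center_iff.mp (hMc n) a).symm
  have hMev : ∀ a : F, (M * C a).eval β = a * M.eval β := by
    intro a
    rw [hMC a, eval_C_mul]
  -- key computation: (hd * C((h*Cδ)(β)))(β) = δ * M(β)
  have hkey : ∀ e : F, (hd * C ((h * C e).eval β)).eval β = e * M.eval β := by
    intro e
    rw [← evalL, ← mul_assoc, ← h2, hMev]
  constructor
  · intro hdd
    rw [hdd, hkey, mul_assoc, mul_inv_cancel₀ hβ, mul_one]
  · intro hδδ
    have h3 : (hd * C d).eval β = δ * M.eval β := by
      rw [hδδ, mul_assoc, inv_mul_cancel₀ hβ, mul_one]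
    set d' := (h * C δ).eval β with hd'
    have h4 : (hd * C (d' - d)).eval β = 0 := by
      rw [C_sub, mul_sub, eval_sub, hkey, h3, sub_self]
    have h5 : (M * C (d' - d)).eval β = 0 := by
      rw [h1, mul_assoc, evalL β h (hd * C (d' - d)), h4, map_zero, mul_zero,
        eval_zero]
    rw [hMev] at h5
    have : d' - d = 0 := by
      rcases mul_eq_zero.mp h5 with h6 | h6
      · exact h6
      · exact absurd h6 hβ
    have := sub_eq_zero.mp this
    rw [← this]
end

section
/- Let H be the real quaternions and let γ₁, γ₂, γ be in the same conjugacy class with γ₁ ≠ γ₂. Then for every polynomial f ∈ H[z], f^ℓ(γ) = (γ−γ₂)(γ₁−γ₂)⁻¹ f^ℓ(γ₁) + (γ−γ₁)(γ₂−γ₁)⁻¹ f^ℓ(γ₂). -/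
open Polynomial

open Quaternion

private lemma re_comm' (a b : ℍ[ℝ]) : (a * b).re = (b * a).re := by
  simp [Quaternion.re_mul]; ring

private lemma re_conj' {h : ℍ[ℝ]} (a : ℍ[ℝ]) (hh : h ≠ 0) : (h * a * h⁻¹).re = a.re := by
  rw [mul_assoc, re_comm', mul_assoc, inv_mul_cancel₀ hh, mul_one]

private lemma normSq_conj' {h : ℍ[ℝ]} (a : ℍ[ℝ]) (hh : h ≠ 0) :
    normSq (h * a * h⁻¹) = normSq a := by
  rw [map_mul, map_mul, map_inv₀]
  field_simp [Quaternion.normSq_ne_zero.2 hh]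

private lemma coe_eq_smul_one' (n : ℝ) : ((n : ℍ[ℝ])) = n • (1 : ℍ[ℝ]) := by
  rw [← Quaternion.coe_one, Quaternion.smul_coe]; norm_num

private lemma sq_lin' {x : ℍ[ℝ]} {t n : ℝ} (ht : 2 * x.re = t) (hn : normSq x = n) :
    x * x = t • x - n • (1 : ℍ[ℝ]) := by
  have h1 : star x * x = ((normSq x : ℝ) : ℍ[ℝ]) := by
    rw [Quaternion.star_mul_self]
  rw [Quaternion.star_eq_two_re_sub, sub_mul, Quaternion.coe_mul_eq_smul, ht, hn,
    coe_eq_smul_one'] at h1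
  rw [← h1]
  abel

private noncomputable def pq (t n : ℝ) : ℕ → ℝ × ℝ
  | 0 => (0, 1)
  | j + 1 => (t * (pq t n j).1 + (pq t n j).2, -n * (pq t n j).1)

private lemma pow_lin' {x : ℍ[ℝ]} {t n : ℝ} (hx : x * x = t • x - n • (1 : ℍ[ℝ])) (j : ℕ) :
    x ^ j = (pq t n j).1 • x + (pq t n j).2 • (1 : ℍ[ℝ]) := by
  induction j with
  | zero => simp [pq]
  | succ j ih =>
    rw [pow_succ, ih, pq, add_mul, smul_mul_assoc, smul_mul_assoc, one_mul, hx, smul_sub,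
      smul_smul, smul_smul]
    module

private lemma lEval_lin' {x : ℍ[ℝ]} {t n : ℝ} (hx : x * x = t • x - n • (1 : ℍ[ℝ]))
    (f : (ℍ[ℝ])[X]) :
    lEval x f = x * (f.sum fun j c => (pq t n j).1 • c) +
      f.sum fun j c => (pq t n j).2 • c := by
  rw [lEval, Polynomial.sum_def, Polynomial.sum_def, Polynomial.sum_def, Finset.mul_sum,
    ← Finset.sum_add_distrib]
  refine Finset.sum_congr rfl fun j _ => ?_
  rw [pow_lin' hx, add_mul, smul_mul_assoc, smul_mul_assoc, one_mul, mul_smul_comm]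

/-- Two-point left Lagrange formula in the quaternions: for γ₁ ≠ γ₂ and γ all in
the same conjugacy class,
f^ℓ(γ) = (γ−γ₂)(γ₁−γ₂)⁻¹ f^ℓ(γ₁) + (γ−γ₁)(γ₂−γ₁)⁻¹ f^ℓ(γ₂). -/
theorem stmt19 (γ₁ γ₂ γ : Quaternion ℝ) (hne : γ₁ ≠ γ₂)
    (h2 : ∃ h : Quaternion ℝ, h ≠ 0 ∧ γ₂ = h * γ₁ * h⁻¹)
    (hγ : ∃ h : Quaternion ℝ, h ≠ 0 ∧ γ = h * γ₁ * h⁻¹)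
    (f : Polynomial (Quaternion ℝ)) :
    lEval γ f = (γ - γ₂) * (γ₁ - γ₂)⁻¹ * lEval γ₁ f
      + (γ - γ₁) * (γ₂ - γ₁)⁻¹ * lEval γ₂ f := by
  obtain ⟨h, hh, rfl⟩ := h2
  obtain ⟨k, hk, rfl⟩ := hγ
  set γ₂ := h * γ₁ * h⁻¹ with hγ₂def
  set γ := k * γ₁ * k⁻¹ with hγdef
  set t : ℝ := 2 * γ₁.re
  set n : ℝ := normSq γ₁
  have hre2 : γ₂.re = γ₁.re := re_conj' γ₁ hh
  have hreγ : γ.re = γ₁.re := re_conj' γ₁ hk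
  have hn2 : normSq γ₂ = n := normSq_conj' γ₁ hh
  have hnγ : normSq γ = n := normSq_conj' γ₁ hk
  have hsq1 : γ₁ * γ₁ = t • γ₁ - n • (1 : ℍ[ℝ]) := sq_lin' rfl rfl
  have hsq2 : γ₂ * γ₂ = t • γ₂ - n • (1 : ℍ[ℝ]) := sq_lin' (by rw [hre2]) hn2
  have hsqγ : γ * γ = t • γ - n • (1 : ℍ[ℝ]) := sq_lin' (by rw [hreγ]) hnγ
  set d : ℍ[ℝ] := γ₁ - γ₂ with hd
  have hdne : d ≠ 0 := sub_ne_zero.2 hne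
  have hN : normSq d ≠ 0 := Quaternion.normSq_ne_zero.2 hdne
  have hstard : star d = -d := by
    rw [hd, star_sub, Quaternion.star_eq_two_re_sub, Quaternion.star_eq_two_re_sub, hre2]
    abel
  have hdinv : d⁻¹ = -((normSq d)⁻¹ • d) := by
    rw [Quaternion.inv_def, hstard, smul_neg]
  have hdd : d * d = -((normSq d) • (1 : ℍ[ℝ])) := by
    have := Quaternion.star_mul_self d
    rw [hstard, neg_mul] at this
    rw [eq_comm, neg_eq_iff_eq_neg, eq_comm, this, coe_eq_smul_one']
  set L : ℍ[ℝ] := (γ - γ₂) * (γ₁ - γ₂)⁻¹ with hL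
  set M : ℍ[ℝ] := (γ - γ₁) * (γ₂ - γ₁)⁻¹ with hM
  have hM' : M = -((γ - γ₁) * d⁻¹) := by
    rw [hM, show γ₂ - γ₁ = -d by rw [hd]; abel, inv_neg, mul_neg]
  have hsum : L + M = 1 := by
    rw [hL, hM', ← sub_eq_add_neg, ← sub_mul,
      show γ - γ₂ - (γ - γ₁) = d by rw [hd]; abel, ← hd, mul_inv_cancel₀ hdne]
  have hkey : γ₁ * d * γ₂ = γ₂ * d * γ₁ := by
    have e1 : γ₁ * d * γ₂ = γ₁ * γ₁ * γ₂ - γ₁ * (γ₂ * γ₂) := by rw [hd]; noncomm_ring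
    have e2 : γ₂ * d * γ₁ = γ₂ * (γ₁ * γ₁) - γ₂ * γ₂ * γ₁ := by rw [hd]; noncomm_ring
    rw [e1, e2, hsq1, hsq2]
    simp only [sub_mul, mul_sub, smul_mul_assoc, mul_smul_comm, mul_one, one_mul]
    abel
  have hcomb : L * γ₁ + M * γ₂ = γ := by
    rw [hL, hM', ← hd, hdinv]
    rw [mul_neg, neg_mul, mul_neg, neg_neg, mul_smul_comm, mul_smul_comm, smul_mul_assoc,
      smul_mul_assoc, neg_add_eq_sub, ← smul_sub]
    have hE : (γ - γ₁) * d * γ₂ - (γ - γ₂) * d * γ₁ = (normSq d) • γ := by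
      have expand : (γ - γ₁) * d * γ₂ - (γ - γ₂) * d * γ₁
          = -(γ * (d * d)) - (γ₁ * d * γ₂ - γ₂ * d * γ₁) := by
        rw [hd]
        noncomm_ring
      rw [expand, hkey, sub_self, sub_zero, hdd, mul_neg, neg_neg, mul_smul_comm, mul_one]
    rw [hE, smul_smul, inv_mul_cancel₀ hN, one_smul]
  rw [lEval_lin' hsq1 f, lEval_lin' hsq2 f, lEval_lin' hsqγ f]
  generalize (f.sum fun j c => (pq t n j).1 • c) = P
  generalize (f.sum fun j c => (pq t n j).2 • c) = Q
  linear_combination (norm := noncomm_ring) -(hcomb * P) - hsum * Q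
end
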